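/- (Example: n ≡ 7 (mod 19) for m = 5.) Equation (2) with m = 5, n₀ = 7, n₁ = 19 has no integer polynomial solution: there are no polynomials x, y, z ∈ ℤ[λ] with positive values on the natural numbers satisfying 5/(7 + 19·t) = 1/x(t) + 1/y(t) + 1/z(t) for every natural number t. -/

import Mathlib

open Polynomial

/-- `x, y, z ∈ ℤ[λ]` form an integer polynomial solution of equation (2). -/
def IsIntPolySolution (m n₀ n₁ : ℤ) (x y z : Polynomial ℤ) : Prop :=
  (∀ t : ℕ, 0 < x.eval (t : ℤ)) ∧ (∀ t : ℕ, 0 < y.eval (t : ℤ)) ∧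
  (∀ t : ℕ, 0 < z.eval (t : ℤ)) ∧
  C m * (x * y * z) = (C n₀ + C n₁ * X) * (x * y + x * z + y * z)


open Polynomial

namespace NoSol719

noncomputable def pp : Polynomial ℤ := C 19 * X + C 7

lemma pp_def : pp = C 19 * X + C 7 := rfl

lemma pp_eval (t : ℤ) : pp.eval t = 19 * t + 7 := by simp [pp_def]

lemma pp_eval_pos (t : ℕ) : 0 < pp.eval (t : ℤ) := by rw [pp_eval]; positivity

lemma pp_ne_zero : pp ≠ 0 := by
  intro h
  have h2 := pp_eval 0
  rw [h] at h2
  simp at h2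

lemma pp_natDegree : pp.natDegree = 1 := natDegree_linear (by norm_num)

lemma pp_leadingCoeff : pp.leadingCoeff = 19 := leadingCoeff_linear (by norm_num)

noncomputable def phi : Polynomial ℤ →+* ℚ := eval₂RingHom (Int.castRingHom ℚ) (-(7/19))

lemma phi_C (a : ℤ) : phi (C a) = (a : ℚ) := by simp [phi]

lemma phi_pp : phi pp = 0 := by
  simp [phi, pp_def]
  norm_num

lemma div_rep : ∀ (n : ℕ) (f : Polynomial ℤ), f.natDegree ≤ n →
    ∃ (Q : Polynomial ℤ) (c : ℤ), (C 19)^n * f = Q * pp + C c := by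
  intro n
  induction n with
  | zero =>
    intro f hf
    obtain ⟨a, ha⟩ := natDegree_eq_zero.mp (Nat.le_zero.mp hf)
    exact ⟨0, a, by rw [← ha]; ring⟩
  | succ n ih =>
    intro f hf
    have hdiv : f.divX.natDegree ≤ n := by
      have h1 := natDegree_divX_eq_natDegree_tsub_one (p := f)
      omega
    obtain ⟨Q', c', h'⟩ := ih f.divX hdiv
    refine ⟨Q' * (pp - C 7) + C c', 19^(n+1) * f.coeff 0 - 7 * c', ?_⟩
    have hf2 : f.divX * X + C (f.coeff 0) = f := divX_mul_X_add f
    have hC : (C (19^(n+1) * f.coeff 0 - 7 * c') : Polynomial ℤ)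
        = (C 19)^(n+1) * C (f.coeff 0) - C 7 * C c' := by
      rw [map_sub, map_mul, map_mul, map_pow]
    rw [hC, pp_def]
    rw [pp_def] at h'
    linear_combination (C 19 * X) * h' - ((C 19 : Polynomial ℤ))^(n+1) * hf2


lemma phi_denom (f : Polynomial ℤ) : ∃ c : ℤ, (19:ℚ)^(f.natDegree) * phi f = (c:ℚ) := by
  obtain ⟨Q, c, h⟩ := div_rep f.natDegree f le_rfl
  refine ⟨c, ?_⟩
  have h2 := congrArg phi h
  simp only [map_mul, map_add, map_pow, phi_C, phi_pp, mul_zero, zero_add] at h2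
  push_cast at h2
  exact h2

lemma strip (g h : Polynomial ℤ) (hgh : C 19 * g = pp * h) : pp ∣ g := by
  have h19 : ((Int.castRingHom (ZMod 19)) 19) = 0 := by decide
  have h7 : (11 : ZMod 19) * ((Int.castRingHom (ZMod 19)) 7) = 1 := by decide
  have hmap : h.map (Int.castRingHom (ZMod 19)) = 0 := by
    have h2 := congrArg (Polynomial.map (Int.castRingHom (ZMod 19))) hgh
    rw [Polynomial.map_mul, Polynomial.map_mul, pp_def, Polynomial.map_add,
      Polynomial.map_mul, map_C, map_C, map_X, h19] at h2
    rw [map_zero, zero_mul, zero_mul, zero_add] at h2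
    have h3 := congrArg (fun q => (C (11 : ZMod 19)) * q) h2
    simp only [mul_zero, ← mul_assoc, ← map_mul, h7, map_one, one_mul] at h3
    exact h3.symm
  have hdvd : (C 19 : Polynomial ℤ) ∣ h := by
    rw [C_dvd_iff_dvd_coeff]
    intro i
    have := congrArg (fun q => Polynomial.coeff q i) hmap
    simp only [coeff_map, coeff_zero] at this
    exact_mod_cast (ZMod.intCast_zmod_eq_zero_iff_dvd _ 19).mp this
  obtain ⟨h', rfl⟩ := hdvd
  refine ⟨h', mul_left_cancel₀ (show (C 19 : Polynomial ℤ) ≠ 0 by simp) ?_⟩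
  rw [hgh]; ring

lemma phi_eq_zero_dvd {f : Polynomial ℤ} (hf : phi f = 0) : pp ∣ f := by
  obtain ⟨Q, c, h⟩ := div_rep f.natDegree f le_rfl
  have hc : c = 0 := by
    have h2 := congrArg phi h
    simp only [map_mul, map_add, map_pow, phi_C, phi_pp, hf, mul_zero, zero_add] at h2
    exact_mod_cast h2.symm
  rw [hc, map_zero, add_zero] at h
  have key : ∀ (n : ℕ) (g : Polynomial ℤ), pp ∣ (C 19)^n * g → pp ∣ g := by
    intro n
    induction n with
    | zero => intro g hg; simpa using hg
    | succ n ih =>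
      intro g hg
      have h2 : pp ∣ (C 19)^n * (C 19 * g) := by
        rw [show (C 19 : Polynomial ℤ)^n * (C 19 * g) = (C 19)^(n+1) * g by ring]
        exact hg
      obtain ⟨h₂, hh⟩ := ih _ h2
      exact strip g h₂ hh
  exact key _ f ⟨Q, by rw [h]; ring⟩

lemma dvd_phi_zero {f : Polynomial ℤ} (h : pp ∣ f) : phi f = 0 := by
  obtain ⟨g, rfl⟩ := h
  rw [map_mul, phi_pp, zero_mul]

lemma exists_fac : ∀ (N : ℕ) (f : Polynomial ℤ), f ≠ 0 → f.natDegree ≤ N →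
    ∃ (n : ℕ) (u : Polynomial ℤ), f = pp^n * u ∧ ¬ pp ∣ u := by
  intro N
  induction N with
  | zero =>
    intro f hf hd
    refine ⟨0, f, by ring, ?_⟩
    rintro ⟨g, rfl⟩
    have hg : g ≠ 0 := by rintro rfl; simp at hf
    have := natDegree_mul pp_ne_zero hg
    rw [pp_natDegree] at this
    omega
  | succ N ih =>
    intro f hf hd
    by_cases hdvd : pp ∣ f
    · obtain ⟨g, rfl⟩ := hdvd
      have hg : g ≠ 0 := by rintro rfl; simp at hf
      have hdeg : g.natDegree ≤ N := by
        have := natDegree_mul pp_ne_zero hg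
        rw [pp_natDegree] at this
        omega
      obtain ⟨n, u, h1, h2⟩ := ih g hg hdeg
      exact ⟨n+1, u, by rw [h1]; ring, h2⟩
    · exact ⟨0, f, by ring, hdvd⟩

lemma pos_ne_zero {f : Polynomial ℤ} (hf : ∀ t : ℕ, 0 < f.eval (t:ℤ)) : f ≠ 0 := by
  intro h
  have := hf 0
  rw [h] at this
  simp at this

lemma pos_lead {f : Polynomial ℤ} (hf : ∀ t : ℕ, 0 < f.eval (t:ℤ)) : 0 < f.leadingCoeff := by
  by_contra hle
  push_neg at hle
  rcases Nat.eq_zero_or_pos f.natDegree with h0 | hpos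
  · obtain ⟨a, ha⟩ := natDegree_eq_zero.mp h0
    have h1 := hf 0
    rw [← ha] at h1 hle
    simp only [eval_C, Nat.cast_zero] at h1
    rw [leadingCoeff_C] at hle
    omega
  · set F : Polynomial ℝ := f.map (Int.castRingHom ℝ) with hF
    have hinj : Function.Injective (⇑(Int.castRingHom ℝ)) := fun a b hab => by
      simpa using hab
    have hdeg : F.degree = f.degree := degree_map_eq_of_injective hinj f
    have hdegpos : 0 < F.degree := by
      rw [hdeg]; exact natDegree_pos_iff_degree_pos.mp hpos
    have hnd : F.natDegree = f.natDegree := by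
      simp [Polynomial.natDegree, hdeg]
    have hlead : F.leadingCoeff ≤ 0 := by
      rw [Polynomial.leadingCoeff, hnd, coeff_map]
      have h9 : ((f.coeff f.natDegree : ℤ) : ℝ) ≤ 0 := by exact_mod_cast hle
      simpa using h9
    have htends := tendsto_atBot_of_leadingCoeff_nonpos F hdegpos hlead
    have hev : ∀ᶠ x : ℝ in Filter.atTop, F.eval x ≤ -1 :=
      htends.eventually (Filter.eventually_le_atBot (-1))
    obtain ⟨X0, hX0⟩ := Filter.eventually_atTop.mp hev
    set t : ℕ := ⌈X0⌉₊ with ht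
    have h1 : F.eval (t:ℝ) ≤ -1 := hX0 _ (Nat.le_ceil X0)
    have h2 := eval_intCast_map (Int.castRingHom ℝ) f (t:ℤ)
    rw [← hF] at h2
    have h3 := hf t
    have h4 : ((t:ℤ):ℝ) = (t:ℝ) := by push_cast; ring
    rw [h4] at h2
    rw [h2] at h1
    simp only [eq_intCast] at h1
    have h6 : f.eval ((t:ℕ):ℤ) ≤ -1 := by exact_mod_cast h1
    have h7 := hf t
    omega

lemma lead_of_eq_add {L T0 T2 : Polynomial ℤ} (h : L = T0 + T2)
    (hlt : T0.natDegree < L.natDegree) :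
    T2.natDegree = L.natDegree ∧ T2.leadingCoeff = L.leadingCoeff := by
  have hT2 : T2 = L - T0 := by rw [h]; ring
  have hdlt : T0.degree < L.degree := degree_lt_degree hlt
  have hdeg : (L - T0).degree = L.degree := degree_sub_eq_left_of_degree_lt hdlt
  constructor
  · rw [hT2]
    simp [Polynomial.natDegree, hdeg]
  · rw [hT2, sub_eq_neg_add, leadingCoeff_add_of_degree_lt]
    rwa [degree_neg]


lemma beta (u v w : Polynomial ℤ)
    (hu : ∀ t : ℕ, 0 < u.eval (t:ℤ)) (hv : ∀ t : ℕ, 0 < v.eval (t:ℤ))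
    (hw : ∀ t : ℕ, 0 < w.eval (t:ℤ))
    (hpu : ¬ pp ∣ u) (hpv : ¬ pp ∣ v)
    (hA : 1 ≤ u.natDegree) (hCd : w.natDegree = 0)
    (h3 : C 5 * (u * v * w) = u * v + u * w + pp * (v * w)) : False := by
  obtain ⟨c, hc⟩ := natDegree_eq_zero.mp hCd
  subst hc
  have hc1 : 1 ≤ c := by
    have := hw 0
    simp at this; omega
  have E2 : u * v * (C 5 * C c - 1) = C c * u + C c * pp * v := by linear_combination h3
  have hU : phi u ≠ 0 := fun h => hpu (phi_eq_zero_dvd h)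
  have hV : phi v ≠ 0 := fun h => hpv (phi_eq_zero_dvd h)
  have hphi := congrArg phi E2
  simp only [map_mul, map_sub, map_add, map_one, phi_C, phi_pp, mul_zero, zero_mul,
    add_zero] at hphi
  push_cast at hphi
  have hVc : phi v * (5 * (c:ℚ) - 1) = (c:ℚ) := by
    have h0 : phi u * (phi v * (5 * (c:ℚ) - 1) - c) = 0 := by linear_combination hphi
    have h1 := (mul_eq_zero.mp h0).resolve_left hU
    linarith [h1]
  rcases Nat.eq_zero_or_pos v.natDegree with hB0 | hB1
  · -- v constant : immediate contradiction
    obtain ⟨b, hb⟩ := natDegree_eq_zero.mp hB0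
    rw [← hb, phi_C] at hVc
    have hbc : (b:ℤ) * (5*c - 1) = c := by exact_mod_cast hVc
    have hb1 : 1 ≤ b := by
      have := hv 0
      rw [← hb] at this
      simp at this; omega
    nlinarith [mul_nonneg (by omega : (0:ℤ) ≤ b - 1) (by omega : (0:ℤ) ≤ 5*c - 1)]
  · -- v nonconstant
    obtain ⟨s, hs⟩ := phi_denom v
    have hsInt : s * (5*c - 1) = 19^(v.natDegree) * c := by
      have hq : (s:ℚ) * (5*(c:ℚ) - 1) = (19:ℚ)^(v.natDegree) * c := by
        rw [← hs]; linear_combination ((19:ℚ)^(v.natDegree)) * hVc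
      exact_mod_cast hq
    have hco : IsCoprime (5*c - 1 : ℤ) c := ⟨-1, 5, by ring⟩
    have hdvd : (5*c - 1 : ℤ) ∣ (19:ℤ)^(v.natDegree) :=
      hco.dvd_of_dvd_mul_right ⟨s, by linear_combination -hsInt⟩
    have hnat : ((5*c - 1 : ℤ).natAbs) ∣ 19^(v.natDegree) := by
      have h1 : ((19:ℤ)^(v.natDegree)).natAbs = 19^(v.natDegree) := by
        simp [Int.natAbs_pow]
      have h2 := Int.natAbs_dvd_natAbs.mpr hdvd
      rwa [h1] at h2
    obtain ⟨fe, hfeB, hfe⟩ := (Nat.dvd_prime_pow (by norm_num)).mp hnat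
    have hfZ : (5*c - 1 : ℤ) = 19^fe := by
      have h1 : ((5*c-1:ℤ).natAbs : ℤ) = 5*c-1 := Int.natAbs_of_nonneg (by omega)
      rw [hfe] at h1
      push_cast at h1
      linarith
    have hfe1 : 1 ≤ fe := by
      rcases Nat.eq_zero_or_pos fe with h | h
      · rw [h] at hfZ; simp at hfZ; omega
      · exact h
    have hune : u ≠ 0 := pos_ne_zero hu
    have hvne : v ≠ 0 := pos_ne_zero hv
    have hapos := pos_lead hu
    have hbpos := pos_lead hv
    have hK5 : (C 5 * C c - 1 : Polynomial ℤ) = C (5*c - 1) := by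
      rw [map_sub, map_mul]; simp
    rw [hK5] at E2
    have hK5ne : (C (5*c - 1) : Polynomial ℤ) ≠ 0 := by
      simp only [ne_eq, C_eq_zero]; omega
    have hcne : (C c : Polynomial ℤ) ≠ 0 := by simp only [ne_eq, C_eq_zero]; omega
    have hL : (u * v * C (5*c-1)).natDegree = u.natDegree + v.natDegree := by
      rw [natDegree_mul (mul_ne_zero hune hvne) hK5ne, natDegree_mul hune hvne, natDegree_C]
      omega
    have hT1 : (C c * u).natDegree = u.natDegree := by
      rw [natDegree_mul hcne hune, natDegree_C]
      omega
    have hT2deg : (C c * pp * v).natDegree = 1 + v.natDegree := by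
      rw [natDegree_mul (mul_ne_zero hcne pp_ne_zero) hvne, natDegree_mul hcne pp_ne_zero,
          pp_natDegree, natDegree_C]
    rcases (show u.natDegree = 1 ∨ 2 ≤ u.natDegree by omega) with hA1 | hA2
    · -- deg u = 1
      have hlt : (C c * u).natDegree < (u * v * C (5*c-1)).natDegree := by
        rw [hT1, hL]; omega
      obtain ⟨hdeg2, hlead2⟩ := lead_of_eq_add E2 hlt
      rw [leadingCoeff_mul, leadingCoeff_mul, leadingCoeff_C, pp_leadingCoeff,
          leadingCoeff_mul, leadingCoeff_mul, leadingCoeff_C] at hlead2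
      set a := u.leadingCoeff with hadef
      set b := v.leadingCoeff with hbdef
      have hab : a * (5*c - 1) = 19 * c := by
        have hbne : b ≠ 0 := ne_of_gt hbpos
        apply mul_right_cancel₀ hbne
        linear_combination -hlead2
      obtain ⟨g, rfl⟩ : ∃ g, fe = g + 1 := ⟨fe - 1, by omega⟩
      have h5a : 5 * (a * 19^g) = 19^(g+1) + 1 := by
        have h1 : a * (19:ℤ)^(g+1) = 19 * c := by rw [← hfZ]; exact hab
        have h5c : (5:ℤ)*c = 19^(g+1) + 1 := by omega
        have h2 : (19:ℤ) * (5*(a*19^g)) = 19 * (19^(g+1) + 1) := by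
          linear_combination 5 * h1 + 19 * h5c
        exact mul_left_cancel₀ (by norm_num : (19:ℤ) ≠ 0) h2
      have hg0 : g = 0 := by
        by_contra hg
        obtain ⟨g', rfl⟩ : ∃ g', g = g' + 1 := ⟨g - 1, by omega⟩
        have hd19 : (19:ℤ) ∣ 1 := ⟨5*(a*19^g') - 19^(g'+1), by linear_combination -h5a⟩
        norm_num at hd19
      subst hg0
      have ha4 : a = 4 := by norm_num at h5a; omega
      have hc4 : c = 4 := by norm_num at hfZ; omega
      have hco1' : u.coeff 1 = a := by
        rw [hadef, ← hA1]; exact coeff_natDegree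
      have hueq : u = C 4 * X + C (u.coeff 0) := by
        have h1 := eq_X_add_C_of_natDegree_le_one (le_of_eq hA1)
        rw [hco1', ha4] at h1
        exact h1
      set β := u.coeff 0 with hβ
      subst hc4
      rw [hueq, pp_def] at E2
      norm_num at E2
      have hcast : ((β : ℤ) : Polynomial ℤ) = C β := by simp [Polynomial.C_eq_intCast]
      rw [hcast] at E2
      have hd1 : (C (19*β - 28) : Polynomial ℤ) = 19 * C β - 28 := by
        rw [map_sub, map_mul]; norm_num
      have hd2 : (C (4*β) : Polynomial ℤ) = 4 * C β := by
        rw [map_mul]; norm_num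
      have hd3 : (C 16 : Polynomial ℤ) = 16 := by norm_num
      have E5 : v * C (19*β - 28) = C 16 * X + C (4*β) := by
        rw [hd1, hd2, hd3]
        linear_combination E2
      have hco1 : v.coeff 1 * (19*β - 28) = 16 := by
        have h1 := congrArg (fun q : Polynomial ℤ => q.coeff 1) E5
        simp only [coeff_mul_C, coeff_add, coeff_C_mul, coeff_X_one, coeff_C,
          mul_one, if_neg (one_ne_zero), add_zero] at h1
        exact h1
      have hDne : (19*β - 28 : ℤ) ≠ 0 := by
        intro h0
        rw [h0, mul_zero] at hco1
        norm_num at hco1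
      have hB1' : v.natDegree = 1 := by
        have h1 := congrArg Polynomial.natDegree E5
        rw [natDegree_mul hvne (fun h => hDne (C_eq_zero.mp h)), natDegree_C,
            natDegree_linear (by norm_num : (16:ℤ) ≠ 0)] at h1
        omega
      have hbco : v.coeff 1 = b := by
        rw [hbdef, ← hB1']; exact coeff_natDegree
      rw [hbco] at hco1
      have hDpos : 0 < 19*β - 28 := by
        by_contra hcon
        push_neg at hcon
        nlinarith [mul_nonpos_of_nonneg_of_nonpos (le_of_lt hbpos) hcon]
      have hDle : 19*β - 28 ≤ 16 := by
        have h1 := le_mul_of_one_le_left (le_of_lt hDpos) (by omega : (1:ℤ) ≤ b)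
        omega
      have hD10 : 19*β - 28 = 10 := by omega
      rw [hD10] at hco1
      omega
    · -- deg u ≥ 2 : impossible by degrees
      have hle2 := natDegree_add_le (C c * u) (C c * pp * v)
      rw [← E2, hL, hT1, hT2deg] at hle2
      rcases le_sup_iff.mp hle2 with h | h <;> omega


lemma core (u v w : Polynomial ℤ) (i d e : ℕ)
    (hu : ∀ t : ℕ, 0 < u.eval (t:ℤ)) (hv : ∀ t : ℕ, 0 < v.eval (t:ℤ))
    (hw : ∀ t : ℕ, 0 < w.eval (t:ℤ))
    (hpu : ¬ pp ∣ u) (hpv : ¬ pp ∣ v) (hpw : ¬ pp ∣ w)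
    (heq : C 5 * ((pp^i * u) * (pp^(i+d) * v) * (pp^(i+d+e) * w)) =
      pp * ((pp^i * u) * (pp^(i+d) * v) + (pp^i * u) * (pp^(i+d+e) * w) +
        (pp^(i+d) * v) * (pp^(i+d+e) * w))) :
    False := by
  have hU : phi u ≠ 0 := fun h => hpu (phi_eq_zero_dvd h)
  have hV : phi v ≠ 0 := fun h => hpv (phi_eq_zero_dvd h)
  have hW : phi w ≠ 0 := fun h => hpw (phi_eq_zero_dvd h)
  have hune : u ≠ 0 := pos_ne_zero hu
  have hvne : v ≠ 0 := pos_ne_zero hv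
  have hwne : w ≠ 0 := pos_ne_zero hw
  -- cancel pp^(2i+d)
  have h1 : C 5 * (pp^(i+d+e) * (u * v * w)) =
      pp * (u*v + pp^e * (u*w) + pp^(d+e) * (v*w)) := by
    have h0 : pp^(2*i+d) * (C 5 * (pp^(i+d+e) * (u * v * w))) =
        pp^(2*i+d) * (pp * (u*v + pp^e * (u*w) + pp^(d+e) * (v*w))) := by
      linear_combination heq
    exact mul_left_cancel₀ (pow_ne_zero _ pp_ne_zero) h0
  rcases Nat.eq_zero_or_pos (i+d+e) with hk0 | hkpos
  · -- i = d = e = 0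
    have hi : i = 0 := by omega
    have hd : d = 0 := by omega
    have he : e = 0 := by omega
    subst hi hd he
    have h2 := congrArg phi h1
    simp only [map_mul, map_add, map_pow, phi_pp, phi_C, pow_zero, one_mul,
      zero_mul, mul_zero] at h2
    push_cast at h2
    have := mul_ne_zero (mul_ne_zero hU hV) hW
    apply this
    have h3 : (5:ℚ) * (phi u * phi v * phi w) = 0 := by linear_combination h2
    linarith [h3]
  · obtain ⟨K, hK⟩ : ∃ K, i+d+e = K+1 := ⟨i+d+e-1, by omega⟩
    rw [hK] at h1
    have h3 : C 5 * (pp^K * (u*v*w)) = u*v + pp^e * (u*w) + pp^(d+e) * (v*w) := by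
      apply mul_left_cancel₀ pp_ne_zero
      linear_combination h1
    rcases Nat.eq_zero_or_pos e with he0 | hepos
    · subst he0
      rcases Nat.eq_zero_or_pos d with hd0 | hdpos
      · -- d = 0 : pointwise contradiction at t = 0
        subst hd0
        have hev := congrArg (Polynomial.eval (0:ℤ)) h3
        simp only [eval_mul, eval_add, eval_pow, eval_C, pp_eval] at hev
        norm_num at hev
        have hu0 : 1 ≤ u.eval (0:ℤ) := by have := hu 0; push_cast at this; omega
        have hv0 : 1 ≤ v.eval (0:ℤ) := by have := hv 0; push_cast at this; omega
        have hw0 : 1 ≤ w.eval (0:ℤ) := by have := hw 0; push_cast at this; omega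
        have h7 : (1:ℤ) ≤ 7^K := one_le_pow₀ (by norm_num)
        nlinarith [mul_le_mul_of_nonneg_left hw0 (by positivity : (0:ℤ) ≤ u.eval 0 * v.eval 0),
          mul_le_mul_of_nonneg_left hv0 (by positivity : (0:ℤ) ≤ u.eval 0 * w.eval 0),
          mul_le_mul_of_nonneg_left hu0 (by positivity : (0:ℤ) ≤ v.eval 0 * w.eval 0),
          mul_le_mul_of_nonneg_right h7 (by positivity : (0:ℤ) ≤ u.eval 0 * v.eval 0 * w.eval 0)]
      · -- d ≥ 1
        rcases Nat.eq_zero_or_pos K with hK0 | hKpos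
        · -- K = 0 : the hard case, i = 0, d = 1
          have hd1 : d = 1 := by omega
          have hi0 : i = 0 := by omega
          subst hd1 hi0
          rw [hK0] at h3
          have h4 : C 5 * (u*v*w) = u*v + u*w + pp*(v*w) := by
            rw [pow_zero] at h3
            linear_combination h3
          -- u nonconstant
          have hA : 1 ≤ u.natDegree := by
            by_contra hcon
            push_neg at hcon
            obtain ⟨a, ha⟩ := natDegree_eq_zero.mp (by omega : u.natDegree = 0)
            have ha1 : 1 ≤ a := by
              have := hu 0
              rw [← ha] at this
              simp at this; omega
            set t : ℕ := a.toNat with htdef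
            have hta : ((t:ℕ):ℤ) = a := Int.toNat_of_nonneg (by omega)
            have hev := congrArg (Polynomial.eval ((t:ℕ):ℤ)) h4
            rw [← ha] at hev
            simp only [eval_mul, eval_add, eval_C, pp_eval] at hev
            rw [hta] at hev
            have hvt := hv t; have hwt := hw t
            rw [hta] at hvt hwt
            nlinarith [mul_pos hvt hwt, mul_pos (show (0:ℤ) < a by omega) hvt,
              mul_pos (show (0:ℤ) < a by omega) hwt,
              mul_pos (mul_pos (show (0:ℤ) < a by omega) hvt) hwt]
          by_cases hCd : w.natDegree = 0
          · exact beta u v w hu hv hw hpu hpv hA hCd h4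
          by_cases hBd : v.natDegree = 0
          · exact beta u w v hu hw hv hpu hpw hA hBd (by linear_combination h4)
          · -- both v, w nonconstant : degree analysis
            have hapos := pos_lead hu
            have hbpos := pos_lead hv
            have hcpos := pos_lead hw
            have hLdeg : (C 5 * (u*v*w)).natDegree =
                u.natDegree + v.natDegree + w.natDegree := by
              rw [natDegree_mul (by norm_num : (C 5 : Polynomial ℤ) ≠ 0)
                    (mul_ne_zero (mul_ne_zero hune hvne) hwne),
                  natDegree_mul (mul_ne_zero hune hvne) hwne,
                  natDegree_mul hune hvne, natDegree_C]
              omega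
            have hT0le : (u*v + u*w).natDegree ≤
                max (u.natDegree + v.natDegree) (u.natDegree + w.natDegree) := by
              refine (natDegree_add_le _ _).trans ?_
              rw [natDegree_mul hune hvne, natDegree_mul hune hwne]
            have hT2deg : (pp*(v*w)).natDegree = 1 + (v.natDegree + w.natDegree) := by
              rw [natDegree_mul pp_ne_zero (mul_ne_zero hvne hwne),
                  natDegree_mul hvne hwne, pp_natDegree]
            rcases (show u.natDegree = 1 ∨ 2 ≤ u.natDegree by omega) with hA1 | hA2
            · -- deg u = 1 : leading coefficients
              have hlt : (u*v + u*w).natDegree < (C 5 * (u*v*w)).natDegree := by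
                rw [hLdeg]
                refine lt_of_le_of_lt hT0le ?_
                apply max_lt <;> omega
              obtain ⟨hdeg2, hlead2⟩ := lead_of_eq_add h4 hlt
              simp only [leadingCoeff_mul, pp_leadingCoeff, leadingCoeff_C] at hlead2
              -- 19 * (b*c) = 5 * (a*b*c)
              have h5a : (19:ℤ) = 5 * u.leadingCoeff := by
                have hbcne : v.leadingCoeff * w.leadingCoeff ≠ 0 :=
                  mul_ne_zero (ne_of_gt hbpos) (ne_of_gt hcpos)
                apply mul_right_cancel₀ hbcne
                linear_combination hlead2
              omega
            · -- deg u ≥ 2 : degree contradiction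
              have hle2 := natDegree_add_le (u*v + u*w) (pp*(v*w))
              rw [← h4, hLdeg, hT2deg] at hle2
              rcases le_sup_iff.mp hle2 with h | h
              · have := le_trans h hT0le
                rcases le_max_iff.mp this with h' | h' <;> omega
              · omega
        · -- K ≥ 1, d ≥ 1, e = 0 : B2a leading coefficient analysis
          have hapos := pos_lead hu
          have hbpos := pos_lead hv
          have hcpos := pos_lead hw
          have h4 : C 5 * (pp^K * (u*v*w)) = (u*v + u*w) + pp^d * (v*w) := by
            linear_combination h3
          have hLdeg : (C 5 * (pp^K * (u*v*w))).natDegree =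
              K + (u.natDegree + v.natDegree + w.natDegree) := by
            rw [natDegree_mul (by norm_num : (C 5 : Polynomial ℤ) ≠ 0)
                  (mul_ne_zero (pow_ne_zero _ pp_ne_zero) (mul_ne_zero (mul_ne_zero hune hvne) hwne)),
                natDegree_mul (pow_ne_zero _ pp_ne_zero) (mul_ne_zero (mul_ne_zero hune hvne) hwne),
                natDegree_pow, pp_natDegree,
                natDegree_mul (mul_ne_zero hune hvne) hwne,
                natDegree_mul hune hvne, natDegree_C]
            omega
          have hT0le : (u*v + u*w).natDegree ≤
              max (u.natDegree + v.natDegree) (u.natDegree + w.natDegree) := by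
            refine (natDegree_add_le _ _).trans ?_
            rw [natDegree_mul hune hvne, natDegree_mul hune hwne]
          have hT2deg : (pp^d*(v*w)).natDegree = d + (v.natDegree + w.natDegree) := by
            rw [natDegree_mul (pow_ne_zero _ pp_ne_zero) (mul_ne_zero hvne hwne),
                natDegree_mul hvne hwne, natDegree_pow, pp_natDegree]
            omega
          have hlt : (u*v + u*w).natDegree < (C 5 * (pp^K * (u*v*w))).natDegree := by
            rw [hLdeg]
            refine lt_of_le_of_lt hT0le ?_
            apply max_lt <;> omega
          obtain ⟨hdeg2, hlead2⟩ := lead_of_eq_add h4 hlt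
          -- degrees : d = K + deg u
          rw [hT2deg, hLdeg] at hdeg2
          have hdKA : d = K + u.natDegree := by omega
          -- leading coefficients
          simp only [leadingCoeff_mul, leadingCoeff_pow, pp_leadingCoeff,
            leadingCoeff_C] at hlead2
          -- hlead2 : 19^d * (b*c) = 5 * (19^K * (a*b*c))
          have h19A : (19:ℤ)^(u.natDegree) = 5 * u.leadingCoeff := by
            have h6 : (19:ℤ)^K * ((19:ℤ)^(u.natDegree) * (v.leadingCoeff * w.leadingCoeff)) =
                (19:ℤ)^K * (5 * u.leadingCoeff * (v.leadingCoeff * w.leadingCoeff)) := by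
              rw [hdKA] at hlead2
              linear_combination hlead2
            have h7 := mul_left_cancel₀ (pow_ne_zero K (by norm_num : (19:ℤ) ≠ 0)) h6
            exact mul_right_cancel₀
              (mul_ne_zero (ne_of_gt hbpos) (ne_of_gt hcpos)) h7
          have h5dvd : (5:ℤ) ∣ 19^(u.natDegree) := ⟨u.leadingCoeff, h19A⟩
          have h5p : Prime (5:ℤ) := by norm_num
          have := h5p.dvd_of_dvd_pow h5dvd
          norm_num at this
    · -- e ≥ 1
      rcases Nat.eq_zero_or_pos K with hK0 | hKpos
      · -- K = 0 : i = d = 0, e = 1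
        have hi0 : i = 0 := by omega
        have hd0 : d = 0 := by omega
        have he1 : e = 1 := by omega
        subst hi0 hd0 he1
        rw [hK0] at h3
        have h2 := congrArg phi h3
        simp only [map_mul, map_add, map_pow, phi_pp, phi_C, pow_zero, pow_one,
          one_mul, zero_mul, mul_zero, add_zero] at h2
        push_cast at h2
        -- h2 : 5 * (phi u * phi v * phi w) = phi u * phi v
        have h5W : (5:ℚ) * phi w = 1 := by
          have h0 : (phi u * phi v) * (5 * phi w - 1) = 0 := by linear_combination h2
          have h1' := (mul_eq_zero.mp h0).resolve_left (mul_ne_zero hU hV)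
          linarith [h1']
        obtain ⟨s, hs⟩ := phi_denom w
        have h5s : (5:ℤ) * s = 19^(w.natDegree) := by
          have hq : (5:ℚ) * (s:ℚ) = (19:ℚ)^(w.natDegree) := by
            rw [← hs]
            linear_combination ((19:ℚ)^(w.natDegree)) * h5W
          exact_mod_cast hq
        have h5dvd : (5:ℤ) ∣ 19^(w.natDegree) := ⟨s, h5s.symm⟩
        have h5p : Prime (5:ℤ) := by norm_num
        have := h5p.dvd_of_dvd_pow h5dvd
        norm_num at this
      · -- K ≥ 1 : phi kills everything except u*v
        have h2 := congrArg phi h3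
        have hppK : phi (pp^K) = 0 := by
          rw [map_pow, phi_pp, zero_pow (by omega : K ≠ 0)]
        have hppe : phi (pp^e) = 0 := by
          rw [map_pow, phi_pp, zero_pow (by omega : e ≠ 0)]
        have hppde : phi (pp^(d+e)) = 0 := by
          rw [map_pow, phi_pp, zero_pow (by omega : d+e ≠ 0)]
        simp only [map_mul, map_add, hppK, hppe, hppde, phi_C, zero_mul, mul_zero,
          add_zero] at h2
        -- h2 : 0 = phi u * phi v
        exact hU (by
          rcases mul_eq_zero.mp h2.symm with h | h
          · exact h
          · exact absurd h hV)

end NoSol719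


open NoSol719 in
/-- Example: equation (2) with `m = 5`, `n ≡ 7 (mod 19)` has no integer
polynomial solution. -/
theorem no_solution_7_mod_19 :
    ¬ ∃ x y z : Polynomial ℤ, IsIntPolySolution 5 7 19 x y z := by
  rintro ⟨x, y, z, hsol⟩
  obtain ⟨hx, hy, hz, heq⟩ := hsol
  rw [show (C 7 + C 19 * X : Polynomial ℤ) = pp by rw [pp_def]; ring] at heq
  obtain ⟨nx, u, hxu, hpu⟩ := exists_fac x.natDegree x (pos_ne_zero hx) le_rfl
  obtain ⟨ny, v, hyv, hpv⟩ := exists_fac y.natDegree y (pos_ne_zero hy) le_rfl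
  obtain ⟨nz, w, hzw, hpw⟩ := exists_fac z.natDegree z (pos_ne_zero hz) le_rfl
  have hu : ∀ t : ℕ, 0 < u.eval (t:ℤ) := by
    intro t
    have h1 := hx t
    rw [hxu, eval_mul, eval_pow] at h1
    have h2 : (0:ℤ) < (pp.eval (t:ℤ))^nx := pow_pos (pp_eval_pos t) nx
    rcases mul_pos_iff.mp h1 with ⟨_, h⟩ | ⟨h, _⟩
    · exact h
    · linarith
  have hv : ∀ t : ℕ, 0 < v.eval (t:ℤ) := by
    intro t
    have h1 := hy t
    rw [hyv, eval_mul, eval_pow] at h1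
    have h2 : (0:ℤ) < (pp.eval (t:ℤ))^ny := pow_pos (pp_eval_pos t) ny
    rcases mul_pos_iff.mp h1 with ⟨_, h⟩ | ⟨h, _⟩
    · exact h
    · linarith
  have hw : ∀ t : ℕ, 0 < w.eval (t:ℤ) := by
    intro t
    have h1 := hz t
    rw [hzw, eval_mul, eval_pow] at h1
    have h2 : (0:ℤ) < (pp.eval (t:ℤ))^nz := pow_pos (pp_eval_pos t) nz
    rcases mul_pos_iff.mp h1 with ⟨_, h⟩ | ⟨h, _⟩
    · exact h
    · linarith
  subst hxu hyv hzw
  rcases le_total nx ny with h1 | h1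
  · rcases le_total ny nz with h2 | h2
    · obtain ⟨d, rfl⟩ : ∃ d, ny = nx + d := ⟨ny - nx, by omega⟩
      obtain ⟨e, rfl⟩ : ∃ e, nz = nx + d + e := ⟨nz - (nx + d), by omega⟩
      exact core u v w nx d e hu hv hw hpu hpv hpw (by linear_combination heq)
    · rcases le_total nx nz with h3 | h3
      · obtain ⟨d, rfl⟩ : ∃ d, nz = nx + d := ⟨nz - nx, by omega⟩
        obtain ⟨e, rfl⟩ : ∃ e, ny = nx + d + e := ⟨ny - (nx + d), by omega⟩
        exact core u w v nx d e hu hw hv hpu hpw hpv (by linear_combination heq)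
      · obtain ⟨d, rfl⟩ : ∃ d, nx = nz + d := ⟨nx - nz, by omega⟩
        obtain ⟨e, rfl⟩ : ∃ e, ny = nz + d + e := ⟨ny - (nz + d), by omega⟩
        exact core w u v nz d e hw hu hv hpw hpu hpv (by linear_combination heq)
  · rcases le_total nx nz with h2 | h2
    · obtain ⟨d, rfl⟩ : ∃ d, nx = ny + d := ⟨nx - ny, by omega⟩
      obtain ⟨e, rfl⟩ : ∃ e, nz = ny + d + e := ⟨nz - (ny + d), by omega⟩
      exact core v u w ny d e hv hu hw hpv hpu hpw (by linear_combination heq)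
    · rcases le_total ny nz with h3 | h3
      · obtain ⟨d, rfl⟩ : ∃ d, nz = ny + d := ⟨nz - ny, by omega⟩
        obtain ⟨e, rfl⟩ : ∃ e, nx = ny + d + e := ⟨nx - (ny + d), by omega⟩
        exact core v w u ny d e hv hw hu hpv hpw hpu (by linear_combination heq)
      · obtain ⟨d, rfl⟩ : ∃ d, ny = nz + d := ⟨ny - nz, by omega⟩
        obtain ⟨e, rfl⟩ : ∃ e, nx = nz + d + e := ⟨nx - (nz + d), by omega⟩
        exact core w v u nz d e hw hv hu hpw hpv hpu (by linear_combination heq)
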